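/- Let d ≥ 2 and let γ ∈ ℝ^{d×d} be symmetric with zero diagonal and with γ_{ij} > 0 for all i ≠ j, and set γ* = min_{i≠j} γ_{ij}. Let a(x) denote the matrix c(x) in the special case where all off-diagonal parameters equal 1, and let c̃(x), ã(x) denote c(x), a(x) with the d-th row and column deleted. Then for every x ∈ Δ^d the matrix c̃(x) − γ* ã(x) is positive semidefinite, and c̃(x) and ã(x) have the same rank. -/

import Mathlib

open Matrix Finset

private def padZero {n d : ℕ} (v : Fin n → ℝ) : Fin d → ℝ :=
  fun k => if h : (k : ℕ) < n then v ⟨k, h⟩ else 0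

private lemma sum_extend {d n : ℕ} (hnd : n ≤ d) (f : Fin d → ℝ)
    (hf : ∀ k : Fin d, ¬ (k : ℕ) < n → f k = 0) :
    ∑ k : Fin d, f k = ∑ k : Fin n, f (Fin.castLE hnd k) := by
  rw [← Finset.sum_image (g := Fin.castLE hnd) (f := f)
      (fun a _ b _ h => Fin.castLE_injective hnd h)]
  refine (Finset.sum_subset (Finset.subset_univ _) ?_).symm
  intro b _ hb
  refine hf b fun hlt => hb ?_
  exact Finset.mem_image.mpr ⟨⟨(b : ℕ), hlt⟩, Finset.mem_univ _, rfl⟩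

private lemma quad_form {d : ℕ} (g : Fin d → Fin d → ℝ)
    (hsymm : ∀ i j, g i j = g j i) (hdiag : ∀ i, g i i = 0)
    (x : Fin d → ℝ) (M : Matrix (Fin d) (Fin d) ℝ)
    (hM : ∀ i j, M i j =
      if i = j then ∑ k ∈ Finset.univ.erase i, g i k * x i * x k
      else -(g i j * x i * x j))
    (w : Fin d → ℝ) :
    w ⬝ᵥ M.mulVec w
      = (1/2) * ∑ i : Fin d, ∑ j : Fin d, g i j * x i * x j * (w i - w j)^2 := by
  have hrow : ∀ i, (M.mulVec w) i = ∑ j : Fin d, g i j * x i * x j * (w i - w j) := by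
    intro i
    have h1 : (M.mulVec w) i = ∑ j, M i j * w j := rfl
    rw [h1, ← Finset.add_sum_erase _ (fun j => M i j * w j) (Finset.mem_univ i),
      ← Finset.add_sum_erase _ (fun j => g i j * x i * x j * (w i - w j)) (Finset.mem_univ i)]
    have h2 : g i i * x i * x i * (w i - w i) = 0 := by ring
    rw [h2]
    rw [hM i i, if_pos rfl, Finset.sum_mul, ← Finset.sum_add_distrib, zero_add]
    refine Finset.sum_congr rfl fun j hj => ?_
    have hji : j ≠ i := Finset.ne_of_mem_erase hj
    rw [hM i j, if_neg (Ne.symm hji)]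
    ring
  have key : w ⬝ᵥ M.mulVec w = ∑ i, ∑ j, g i j * x i * x j * w i * (w i - w j) := by
    rw [dotProduct]
    refine Finset.sum_congr rfl fun i _ => ?_
    rw [hrow i, Finset.mul_sum]
    exact Finset.sum_congr rfl fun j _ => by ring
  have key2 : (∑ i, ∑ j, g i j * x i * x j * w i * (w i - w j))
      = ∑ i, ∑ j, g i j * x i * x j * (-(w j)) * (w i - w j) := by
    rw [Finset.sum_comm]
    refine Finset.sum_congr rfl fun i _ => Finset.sum_congr rfl fun j _ => ?_
    rw [hsymm j i]; ring
  have key3 : ∑ i, ∑ j, g i j * x i * x j * (w i - w j)^2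
      = (∑ i, ∑ j, g i j * x i * x j * w i * (w i - w j))
        + ∑ i, ∑ j, g i j * x i * x j * (-(w j)) * (w i - w j) := by
    rw [← Finset.sum_add_distrib]
    refine Finset.sum_congr rfl fun i _ => ?_
    rw [← Finset.sum_add_distrib]
    exact Finset.sum_congr rfl fun j _ => by ring
  rw [key, key3, ← key2]
  ring

private lemma quad_sub {d n : ℕ} (hnd : n ≤ d) (M : Matrix (Fin d) (Fin d) ℝ)
    (v : Fin n → ℝ) :
    v ⬝ᵥ (M.submatrix (Fin.castLE hnd) (Fin.castLE hnd)).mulVec v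
      = (padZero v : Fin d → ℝ) ⬝ᵥ M.mulVec (padZero v) := by
  set w : Fin d → ℝ := padZero v with hw
  have hw0 : ∀ k : Fin d, ¬ (k : ℕ) < n → w k = 0 := fun k hk => dif_neg hk
  have hwc : ∀ k : Fin n, w (Fin.castLE hnd k) = v k := by
    intro k
    have : ((Fin.castLE hnd k : Fin d) : ℕ) < n := k.isLt
    rw [hw]; unfold padZero; rw [dif_pos this]; rfl
  rw [dotProduct, dotProduct,
    sum_extend hnd (fun k => w k * M.mulVec w k) (fun k hk => by simp [hw0 k hk])]
  refine Finset.sum_congr rfl fun i _ => ?_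
  rw [hwc]
  congr 1
  show (M.submatrix (Fin.castLE hnd) (Fin.castLE hnd)).mulVec v i
      = M.mulVec w (Fin.castLE hnd i)
  rw [Matrix.mulVec, Matrix.mulVec, dotProduct, dotProduct,
    sum_extend hnd (fun k => M (Fin.castLE hnd i) k * w k)
      (fun k hk => by simp [hw0 k hk])]
  exact Finset.sum_congr rfl fun j _ => by rw [hwc, Matrix.submatrix_apply]

private lemma double_sum_zero {d : ℕ} (F : Fin d → Fin d → ℝ) (hF : ∀ i j, 0 ≤ F i j) :
    (∑ i, ∑ j, F i j) = 0 ↔ ∀ i j, F i j = 0 := by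
  rw [Finset.sum_eq_zero_iff_of_nonneg
    (fun i _ => Finset.sum_nonneg fun j _ => hF i j)]
  constructor
  · intro h i j
    have := h i (Finset.mem_univ i)
    rw [Finset.sum_eq_zero_iff_of_nonneg (fun j _ => hF i j)] at this
    exact this j (Finset.mem_univ j)
  · intro h i _
    exact Finset.sum_eq_zero fun j _ => h i j

/-- with `γ* = min_{i≠j} γ_{ij} > 0`, for every `x ∈ Δ^d` the matrix
`c̃(x) − γ* ã(x)` is positive semidefinite and `c̃(x)`, `ã(x)` have the same rank; here
`ã` corresponds to the parameter choice `γ_{ij} = 1` for all `i ≠ j`, and the tilde means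
deleting the `d`-th row and column. -/
theorem statement9 (d : ℕ) (hd : 2 ≤ d)
    (γ : Fin d → Fin d → ℝ)
    (hγsymm : ∀ i j, γ i j = γ j i) (hγdiag : ∀ i, γ i i = 0)
    (hγpos : ∀ i j, i ≠ j → 0 < γ i j)
    (γstar : ℝ)
    (hγstar_le : ∀ i j, i ≠ j → γstar ≤ γ i j)
    (hγstar_mem : ∃ i j, i ≠ j ∧ γstar = γ i j)
    (c a : (Fin d → ℝ) → Matrix (Fin d) (Fin d) ℝ)
    (hc : ∀ x i j, c x i j =
      if i = j then ∑ k ∈ Finset.univ.erase i, γ i k * x i * x k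
      else -(γ i j * x i * x j))
    (ha : ∀ x i j, a x i j =
      if i = j then ∑ k ∈ Finset.univ.erase i, x i * x k
      else -(x i * x j))
    (x : Fin d → ℝ) (hx : x ∈ stdSimplex ℝ (Fin d)) :
    ((c x).submatrix (Fin.castLE (Nat.sub_le d 1)) (Fin.castLE (Nat.sub_le d 1)) -
        γstar • (a x).submatrix (Fin.castLE (Nat.sub_le d 1)) (Fin.castLE (Nat.sub_le d 1))).PosSemidef ∧
      ((c x).submatrix (Fin.castLE (Nat.sub_le d 1)) (Fin.castLE (Nat.sub_le d 1))).rank =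
        ((a x).submatrix (Fin.castLE (Nat.sub_le d 1)) (Fin.castLE (Nat.sub_le d 1))).rank := by
  have hxnn : ∀ i, 0 ≤ x i := hx.1
  set κ : Fin (d-1) → Fin d := Fin.castLE (Nat.sub_le d 1) with hκ
  set gA : Fin d → Fin d → ℝ := fun i j => if i = j then 0 else 1 with hgA
  have hgAsymm : ∀ i j, gA i j = gA j i := by
    intro i j; simp only [hgA]
    by_cases h : i = j
    · subst h; rfl
    · rw [if_neg h, if_neg (Ne.symm h)]
  have hgAdiag : ∀ i, gA i i = 0 := by intro i; simp [hgA]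
  have haM : ∀ i j, a x i j =
      if i = j then ∑ k ∈ Finset.univ.erase i, gA i k * x i * x k
      else -(gA i j * x i * x j) := by
    intro i j
    rw [ha]
    by_cases h : i = j
    · rw [if_pos h, if_pos h]
      refine Finset.sum_congr rfl fun k hk => ?_
      have : i ≠ k := fun he => (Finset.ne_of_mem_erase hk) he.symm
      simp only [hgA, if_neg this, one_mul]
    · have : i ≠ j := h
      simp only [hgA, if_neg this, one_mul]
  -- quadratic forms of the two reduced matrices
  have hqc : ∀ v : Fin (d-1) → ℝ,
      v ⬝ᵥ ((c x).submatrix κ κ).mulVec v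
        = (1/2) * ∑ i, ∑ j, γ i j * x i * x j
            * ((padZero v : Fin d → ℝ) i - (padZero v : Fin d → ℝ) j)^2 :=
    fun v => (quad_sub (Nat.sub_le d 1) (c x) v).trans
      (quad_form γ hγsymm hγdiag x (c x) (hc x) (padZero v))
  have hqa : ∀ v : Fin (d-1) → ℝ,
      v ⬝ᵥ ((a x).submatrix κ κ).mulVec v
        = (1/2) * ∑ i, ∑ j, gA i j * x i * x j
            * ((padZero v : Fin d → ℝ) i - (padZero v : Fin d → ℝ) j)^2 :=
    fun v => (quad_sub (Nat.sub_le d 1) (a x) v).trans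
      (quad_form gA hgAsymm hgAdiag x (a x) haM (padZero v))
  -- T is nonnegative
  have hT : ∀ (v : Fin (d-1) → ℝ) (i j : Fin d),
      0 ≤ x i * x j * ((padZero v : Fin d → ℝ) i - (padZero v : Fin d → ℝ) j)^2 :=
    fun v i j => mul_nonneg (mul_nonneg (hxnn i) (hxnn j)) (sq_nonneg _)
  -- entrywise symmetry of the two reduced matrices
  have hcsym : ∀ p q, c x p q = c x q p := by
    intro p q
    rw [hc, hc]
    by_cases h : p = q
    · rw [if_pos h, if_pos h.symm]; subst h; rfl
    · rw [if_neg h, if_neg (Ne.symm h), hγsymm p q]; ring_nf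
  have hasym : ∀ p q, a x p q = a x q p := by
    intro p q
    rw [ha, ha]
    by_cases h : p = q
    · rw [if_pos h, if_pos h.symm]; subst h; rfl
    · rw [if_neg h, if_neg (Ne.symm h)]; ring_nf
  have hermc : ((c x).submatrix κ κ).IsHermitian := by
    ext i j
    simp only [Matrix.conjTranspose_apply, Matrix.submatrix_apply, star_trivial]
    exact hcsym (κ j) (κ i)
  have herma : ((a x).submatrix κ κ).IsHermitian := by
    ext i j
    simp only [Matrix.conjTranspose_apply, Matrix.submatrix_apply, star_trivial]
    exact hasym (κ j) (κ i)
  have hstar : ∀ v : Fin (d-1) → ℝ, star v = v := fun v => rfl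
  -- first part : PosSemidef of the difference
  have hdiff : ∀ v : Fin (d-1) → ℝ,
      v ⬝ᵥ ((c x).submatrix κ κ - γstar • (a x).submatrix κ κ).mulVec v
        = v ⬝ᵥ ((c x).submatrix κ κ).mulVec v
          - γstar * (v ⬝ᵥ ((a x).submatrix κ κ).mulVec v) := by
    intro v
    rw [Matrix.sub_mulVec, Matrix.smul_mulVec, dotProduct_sub,
      dotProduct_smul, smul_eq_mul]
  have hermD : ((c x).submatrix κ κ - γstar • (a x).submatrix κ κ).IsHermitian := by
    ext i j
    simp only [Matrix.conjTranspose_apply, Matrix.sub_apply, Matrix.smul_apply,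
      Matrix.submatrix_apply, star_trivial, smul_eq_mul]
    rw [hcsym (κ j) (κ i), hasym (κ j) (κ i)]
  have part1 : ((c x).submatrix κ κ - γstar • (a x).submatrix κ κ).PosSemidef := by
    refine posSemidef_iff_dotProduct_mulVec.mpr ⟨?_, ?_⟩
    · exact hermD
    · intro v
      rw [hstar v, hdiff v, hqc v, hqa v]
      have h0 : 0 ≤ ∑ i, ∑ j, (γ i j - γstar * gA i j) * (x i * x j
          * ((padZero v : Fin d → ℝ) i - (padZero v : Fin d → ℝ) j)^2) := by
        refine Finset.sum_nonneg fun i _ => Finset.sum_nonneg fun j _ => ?_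
        by_cases h : i = j
        · subst h
          simp [hγdiag i, hgAdiag i]
        · have h1 : gA i j = 1 := by simp [hgA, h]
          rw [h1, mul_one]
          exact mul_nonneg (sub_nonneg.mpr (hγstar_le i j h)) (hT v i j)
      have hcomb : ∑ i, ∑ j, (γ i j - γstar * gA i j) * (x i * x j
            * ((padZero v : Fin d → ℝ) i - (padZero v : Fin d → ℝ) j)^2)
          = (∑ i, ∑ j, γ i j * x i * x j
              * ((padZero v : Fin d → ℝ) i - (padZero v : Fin d → ℝ) j)^2)
            - γstar * ∑ i, ∑ j, gA i j * x i * x j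
              * ((padZero v : Fin d → ℝ) i - (padZero v : Fin d → ℝ) j)^2 := by
        rw [Finset.mul_sum, ← Finset.sum_sub_distrib]
        refine Finset.sum_congr rfl fun i _ => ?_
        rw [Finset.mul_sum, ← Finset.sum_sub_distrib]
        exact Finset.sum_congr rfl fun j _ => by ring
      nlinarith [h0, hcomb]
  refine ⟨part1, ?_⟩
  -- second part : equal ranks
  have psdc : ((c x).submatrix κ κ).PosSemidef := by
    refine posSemidef_iff_dotProduct_mulVec.mpr ⟨hermc, fun v => ?_⟩
    rw [hstar v, hqc v]
    refine mul_nonneg (by norm_num) ?_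
    refine Finset.sum_nonneg fun i _ => Finset.sum_nonneg fun j _ => ?_
    by_cases h : i = j
    · subst h; rw [hγdiag i]; simp
    · nlinarith [mul_nonneg (le_of_lt (hγpos i j h)) (hT v i j)]
  have psda : ((a x).submatrix κ κ).PosSemidef := by
    refine posSemidef_iff_dotProduct_mulVec.mpr ⟨herma, fun v => ?_⟩
    rw [hstar v, hqa v]
    refine mul_nonneg (by norm_num) ?_
    refine Finset.sum_nonneg fun i _ => Finset.sum_nonneg fun j _ => ?_
    by_cases h : i = j
    · subst h; rw [hgAdiag i]; simp
    · have h1 : gA i j = 1 := by simp [hgA, h]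
      rw [h1, one_mul]
      exact hT v i j
  have hker : ∀ v : Fin (d-1) → ℝ,
      ((c x).submatrix κ κ).mulVec v = 0 ↔ ((a x).submatrix κ κ).mulVec v = 0 := by
    intro v
    rw [← psdc.dotProduct_mulVec_zero_iff v, ← psda.dotProduct_mulVec_zero_iff v,
      hstar v, hqc v, hqa v]
    have hhalf : (1/2 : ℝ) ≠ 0 := by norm_num
    rw [mul_eq_zero, mul_eq_zero]
    simp only [hhalf, false_or]
    have hnn1 : ∀ i j : Fin d, 0 ≤ γ i j * x i * x j
        * ((padZero v : Fin d → ℝ) i - (padZero v : Fin d → ℝ) j)^2 := by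
      intro i j
      by_cases hij : i = j
      · subst hij; rw [hγdiag i]; simp
      · nlinarith [mul_nonneg (le_of_lt (hγpos i j hij)) (hT v i j)]
    have hnn2 : ∀ i j : Fin d, 0 ≤ gA i j * x i * x j
        * ((padZero v : Fin d → ℝ) i - (padZero v : Fin d → ℝ) j)^2 := by
      intro i j
      by_cases hij : i = j
      · subst hij; rw [hgAdiag i]; simp
      · have h1 : gA i j = 1 := by simp [hgA, hij]
        rw [h1, one_mul]
        exact hT v i j
    rw [double_sum_zero _ hnn1, double_sum_zero _ hnn2]
    constructor
    · intro h i j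
      by_cases hij : i = j
      · subst hij; rw [hgAdiag i]; ring
      · have h1 : gA i j = 1 := by simp [hgA, hij]
        rw [h1, one_mul]
        have h2 := h i j
        rw [mul_assoc, mul_assoc] at h2
        rcases mul_eq_zero.mp h2 with h3 | h3
        · exact absurd h3 (ne_of_gt (hγpos i j hij))
        · rw [← mul_assoc] at h3; exact h3
    · intro h i j
      by_cases hij : i = j
      · subst hij; rw [hγdiag i]; ring
      · have h1 := h i j
        have h2 : gA i j = 1 := by simp [hgA, hij]
        rw [h2, one_mul] at h1
        rw [mul_assoc, mul_assoc, ← mul_assoc (x i), h1, mul_zero]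
  have hkerEq : LinearMap.ker ((c x).submatrix κ κ).mulVecLin
      = LinearMap.ker ((a x).submatrix κ κ).mulVecLin := by
    ext v
    simp only [LinearMap.mem_ker, Matrix.mulVecLin_apply]
    exact hker v
  have h1 := LinearMap.finrank_range_add_finrank_ker ((c x).submatrix κ κ).mulVecLin
  have h2 := LinearMap.finrank_range_add_finrank_ker ((a x).submatrix κ κ).mulVecLin
  rw [hkerEq] at h1
  rw [Matrix.rank, Matrix.rank]
  omega
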